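/- Let μ be a locally finite positive Borel measure, let F be a collection of dyadic intervals, and suppose F satisfies the Carleson condition: for every F₀ ∈ F, the sum over F' ∈ F with F' ⊆ F₀ of μ(F') is at most C₀·μ(F₀). Then there exist positive constants δ and C_δ depending only on C₀ such that for every F₀ ∈ F and every n ≥ 0, the sum of μ(F') over all n-th generation descendants F' of F₀ in the tree F is at most C_δ·2^{−δn}·μ(F₀). -/

import Mathlib

open MeasureTheory Set
open scoped ENNReal NNReal

/-- The dyadic interval `[k·2ⁿ, (k+1)·2ⁿ)`. -/
def dyadicInterval (n k : ℤ) : Set ℝ :=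
  Set.Ico ((k : ℝ) * 2 ^ n) (((k : ℝ) + 1) * 2 ^ n)

/-- The `n`-th generation descendants of `q₀` in the tree `F` of dyadic intervals:
those members of `F` contained in the interval of `q₀` whose chain of strict
`F`-ancestors up to `q₀` has length exactly `n`. -/
def dyadicGen (F : Set (ℤ × ℤ)) (q₀ : ℤ × ℤ) (n : ℕ) : Set (ℤ × ℤ) :=
  {q | q ∈ F ∧ dyadicInterval q.1 q.2 ⊆ dyadicInterval q₀.1 q₀.2 ∧
    Set.ncard {q' | q' ∈ F ∧ dyadicInterval q.1 q.2 ⊂ dyadicInterval q'.1 q'.2 ∧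
      dyadicInterval q'.1 q'.2 ⊆ dyadicInterval q₀.1 q₀.2} = n}

namespace Dy

lemma two_zpow_pos (n : ℤ) : (0:ℝ) < 2 ^ n := zpow_pos (by norm_num) n

lemma lt_def (n k : ℤ) : (k:ℝ) * 2 ^ n < ((k:ℝ)+1) * 2 ^ n := by
  have := two_zpow_pos n; nlinarith

lemma nonempty (n k : ℤ) : (dyadicInterval n k).Nonempty :=
  ⟨(k:ℝ) * 2 ^ n, le_refl _, lt_def n k⟩

lemma subset_iff {n k m l : ℤ} :
    dyadicInterval n k ⊆ dyadicInterval m l ↔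
      (l:ℝ) * 2 ^ m ≤ (k:ℝ) * 2 ^ n ∧ ((k:ℝ)+1) * 2 ^ n ≤ ((l:ℝ)+1) * 2 ^ m := by
  rw [dyadicInterval, dyadicInterval, Set.Ico_subset_Ico_iff (lt_def n k)]


lemma scale_le {n k m l : ℤ} (h : dyadicInterval n k ⊆ dyadicInterval m l) : n ≤ m := by
  rw [subset_iff] at h
  have h2 : (2:ℝ) ^ n ≤ 2 ^ m := by nlinarith [h.1, h.2]
  exact (zpow_le_zpow_iff_right₀ (by norm_num : (1:ℝ) < 2)).mp h2

lemma inj {n k m l : ℤ} (h : dyadicInterval n k = dyadicInterval m l) : n = m ∧ k = l := by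
  have h1 := subset_iff.mp h.le
  have h2 := subset_iff.mp h.ge
  have hn : n = m := le_antisymm (scale_le h.le) (scale_le h.ge)
  subst hn
  have hp := two_zpow_pos n
  have : (k:ℝ) = l := by nlinarith [h1.1, h2.1]
  exact ⟨rfl, by exact_mod_cast this⟩

lemma same_scale {n k l : ℤ} {x : ℝ} (hx : x ∈ dyadicInterval n k)
    (hy : x ∈ dyadicInterval n l) : k = l := by
  obtain ⟨h1, h2⟩ := hx
  obtain ⟨h3, h4⟩ := hy
  have hp := two_zpow_pos n
  have : (k:ℝ) = l := by
    rcases lt_trichotomy (k:ℝ) (l:ℝ) with h | h | h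
    · exfalso
      have : (k:ℝ) + 1 ≤ l := by exact_mod_cast (by exact_mod_cast h : k < l)
      nlinarith
    · exact h
    · exfalso
      have : (l:ℝ) + 1 ≤ k := by exact_mod_cast (by exact_mod_cast h : l < k)
      nlinarith
  exact_mod_cast this

/-- Two dyadic intervals that intersect are nested. -/
lemma nested {n k m l : ℤ} (hnm : n ≤ m) {x : ℝ} (hx : x ∈ dyadicInterval n k)
    (hy : x ∈ dyadicInterval m l) : dyadicInterval n k ⊆ dyadicInterval m l := by
  obtain ⟨h1, h2⟩ := hx
  obtain ⟨h3, h4⟩ := hy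
  set d : ℕ := (m - n).toNat with hd
  set t : ℤ := 2 ^ d with ht
  have hmn : m = n + d := by omega
  have h2m : (2:ℝ) ^ m = (t:ℝ) * 2 ^ n := by
    rw [hmn, ht]
    push_cast
    rw [zpow_add₀ (by norm_num : (2:ℝ) ≠ 0)]
    rw [zpow_natCast]
    ring
  have hp := two_zpow_pos n
  have hlt1 : (l * t : ℤ) < k + 1 := by
    have : ((l*t : ℤ):ℝ) * 2 ^ n < ((k:ℝ)+1) * 2 ^ n := by
      push_cast
      calc (l:ℝ) * t * 2^n = (l:ℝ) * 2 ^ m := by rw [h2m]; ring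
      _ ≤ x := h3
      _ < ((k:ℝ)+1) * 2^n := h2
    have := lt_of_mul_lt_mul_right this hp.le
    exact_mod_cast this
  have hlt2 : (k : ℤ) < (l+1) * t := by
    have : ((k:ℤ):ℝ) * 2 ^ n < (((l+1)*t : ℤ):ℝ) * 2 ^ n := by
      push_cast
      calc (k:ℝ) * 2^n ≤ x := h1
      _ < ((l:ℝ)+1) * 2^m := h4
      _ = ((l:ℝ)+1) * t * 2^n := by rw [h2m]; ring
    have := lt_of_mul_lt_mul_right this hp.le
    exact_mod_cast this
  rw [subset_iff]
  constructor
  · have hlk : (l*t : ℤ) ≤ k := by omega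
    have : ((l*t:ℤ):ℝ) * 2^n ≤ (k:ℝ) * 2^n := by
      apply mul_le_mul_of_nonneg_right _ hp.le
      exact_mod_cast hlk
    calc (l:ℝ) * 2^m = ((l*t:ℤ):ℝ) * 2^n := by push_cast; rw [h2m]; ring
    _ ≤ (k:ℝ) * 2^n := this
  · have hk1 : (k+1 : ℤ) ≤ (l+1)*t := by omega
    have : ((k+1:ℤ):ℝ) * 2^n ≤ (((l+1)*t:ℤ):ℝ) * 2^n := by
      apply mul_le_mul_of_nonneg_right _ hp.le
      exact_mod_cast hk1
    calc ((k:ℝ)+1) * 2^n = ((k+1:ℤ):ℝ) * 2^n := by push_cast; ring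
    _ ≤ ((l:ℝ)+1) * 2^m := by rw [h2m]; push_cast at this ⊢; nlinarith [this]

/-- With a common point, subset is equivalent to scale comparison. -/
lemma subset_iff_scale {a b : ℤ × ℤ} {x : ℝ} (hx : x ∈ dyadicInterval a.1 a.2)
    (hy : x ∈ dyadicInterval b.1 b.2) :
    dyadicInterval a.1 a.2 ⊆ dyadicInterval b.1 b.2 ↔ a.1 ≤ b.1 :=
  ⟨scale_le, fun h => nested h hx hy⟩

lemma eq_iff_scale {a b : ℤ × ℤ} {x : ℝ} (hx : x ∈ dyadicInterval a.1 a.2)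
    (hy : x ∈ dyadicInterval b.1 b.2) :
    dyadicInterval a.1 a.2 = dyadicInterval b.1 b.2 ↔ a.1 = b.1 := by
  constructor
  · intro h; exact (inj h).1
  · intro h
    apply le_antisymm (nested h.le hx hy) (nested h.ge hy hx)

lemma ssubset_iff_scale {a b : ℤ × ℤ} {x : ℝ} (hx : x ∈ dyadicInterval a.1 a.2)
    (hy : x ∈ dyadicInterval b.1 b.2) :
    dyadicInterval a.1 a.2 ⊂ dyadicInterval b.1 b.2 ↔ a.1 < b.1 := by
  rw [ssubset_iff_subset_ne, subset_iff_scale hx hy, ne_eq, eq_iff_scale hx hy]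
  omega


lemma exists_count_above (T : Finset ℤ) (m : ℕ) (hm : m < T.card) :
    ∃ t ∈ T, (T.filter (fun b => t < b)).card = m ∧
      (T.filter (fun b => b ≤ t)).card = T.card - m := by
  set n := T.card with hn
  have e := T.orderIsoOfFin hn.symm
  set j : Fin n := ⟨n - 1 - m, by omega⟩ with hj
  refine ⟨(e j : ℤ), (e j).2, ?_⟩
  have key : T.filter (fun b => (e j : ℤ) < b) = (Finset.Ioi j).image (fun i => (e i : ℤ)) := by
    ext b
    simp only [Finset.mem_filter, Finset.mem_image, Finset.mem_Ioi]
    constructor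
    · rintro ⟨hb, hlt⟩
      obtain ⟨i, hi⟩ := e.surjective ⟨b, hb⟩
      refine ⟨i, ?_, by rw [hi]⟩
      have : (e j : ℤ) < (e i : ℤ) := by rw [hi]; exact hlt
      have := e.lt_iff_lt.mp (by exact_mod_cast this : e j < e i)
      exact this
    · rintro ⟨i, hji, rfl⟩
      exact ⟨(e i).2, by exact_mod_cast e.lt_iff_lt.mpr hji⟩
  have hinj : Function.Injective (fun i : Fin n => (e i : ℤ)) := by
    intro a b hab
    exact e.injective (Subtype.ext hab)
  have hcard1 : (T.filter (fun b => (e j : ℤ) < b)).card = m := by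
    rw [key, Finset.card_image_of_injective _ hinj, Fin.card_Ioi]
    have hjv : (j : ℕ) = n - 1 - m := rfl
    omega
  refine ⟨hcard1, ?_⟩
  have := Finset.card_filter_add_card_filter_not (s := T)
    (p := fun b => (e j : ℤ) < b)
  have hEq : T.filter (fun b => ¬ (e j : ℤ) < b) = T.filter (fun b => b ≤ (e j : ℤ)) := by
    apply Finset.filter_congr
    intro x _
    simp [not_lt]
  rw [hEq] at this
  omega



variable (F : Set (ℤ × ℤ))

/-- strict ancestors of `q` below `q₀`. -/
def anc (q q₀ : ℤ × ℤ) : Set (ℤ × ℤ) :=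
  {q' | q' ∈ F ∧ dyadicInterval q.1 q.2 ⊂ dyadicInterval q'.1 q'.2 ∧
      dyadicInterval q'.1 q'.2 ⊆ dyadicInterval q₀.1 q₀.2}

lemma mem_dyadicGen {q q₀ : ℤ × ℤ} {n : ℕ} :
    q ∈ dyadicGen F q₀ n ↔ q ∈ F ∧ dyadicInterval q.1 q.2 ⊆ dyadicInterval q₀.1 q₀.2 ∧
      (anc F q q₀).ncard = n := Iff.rfl

variable {F}

section

variable {q q₀ : ℤ × ℤ} {x : ℝ} (hx : x ∈ dyadicInterval q.1 q.2)

include hx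

lemma mem_anc_of_mem {a : ℤ × ℤ} (ha : a ∈ anc F q q₀) : x ∈ dyadicInterval a.1 a.2 :=
  ha.2.1.1 hx

lemma anc_injOn_fst : Set.InjOn Prod.fst (anc F q q₀) := by
  intro a ha b hb hab
  have hxa := mem_anc_of_mem hx ha
  have hxb := mem_anc_of_mem hx hb
  have : a.2 = b.2 := same_scale (by rw [hab] at hxa; exact hxa) hxb
  exact Prod.ext hab this

lemma anc_finite : (anc F q q₀).Finite := by
  apply Set.Finite.of_finite_image _ (anc_injOn_fst hx)
  apply Set.Finite.subset (Set.finite_Icc (q.1 + 1) q₀.1)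
  rintro _ ⟨a, ha, rfl⟩
  have hxa := mem_anc_of_mem hx ha
  constructor
  · have := (ssubset_iff_scale hx hxa).mp ha.2.1
    omega
  · exact scale_le ha.2.2

end

lemma anc_self (q : ℤ × ℤ) : anc F q q = ∅ := by
  ext a
  simp only [anc, Set.mem_setOf_eq, Set.mem_empty_iff_false, iff_false, not_and]
  intro _ h1 h2
  exact absurd (h1.trans_subset h2 : dyadicInterval q.1 q.2 ⊂ dyadicInterval q.1 q.2)
    (lt_irrefl _)

/-- ancestors of an ancestor `p` are the ancestors above `p`. -/
lemma anc_of_anc {q q₀ p : ℤ × ℤ} (hp : p ∈ anc F q q₀) :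
    anc F p q₀ = {b ∈ anc F q q₀ | dyadicInterval p.1 p.2 ⊂ dyadicInterval b.1 b.2} := by
  ext b
  simp only [anc, Set.mem_setOf_eq]
  constructor
  · rintro ⟨hbF, hsub, hsub0⟩
    exact ⟨⟨hbF, hp.2.1.trans hsub, hsub0⟩, hsub⟩
  · rintro ⟨⟨hbF, _, hsub0⟩, hsub⟩
    exact ⟨hbF, hsub, hsub0⟩

/-- ancestors of `q` below an ancestor `p` are the ancestors at or below `p`. -/
lemma anc_below {q q₀ p : ℤ × ℤ} (hp : p ∈ anc F q q₀) :
    anc F q p = {b ∈ anc F q q₀ | dyadicInterval b.1 b.2 ⊆ dyadicInterval p.1 p.2} := by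
  ext b
  simp only [anc, Set.mem_setOf_eq]
  constructor
  · rintro ⟨hbF, hsub, hsubp⟩
    exact ⟨⟨hbF, hsub, hsubp.trans hp.2.2⟩, hsubp⟩
  · rintro ⟨⟨hbF, hsub, _⟩, hsubp⟩
    exact ⟨hbF, hsub, hsubp⟩

/-- Key structural lemma: any `n`-th generation descendant has, for each `m ≤ n`,
a unique ancestor in generation `m`, of which it is a generation `n - m` descendant. -/
lemma exists_parent {q₀ q : ℤ × ℤ} {n m : ℕ} (hq : q ∈ dyadicGen F q₀ n) (hm : m ≤ n) :
    ∃ p, p ∈ dyadicGen F q₀ m ∧ q ∈ dyadicGen F p (n - m) := by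
  rcases eq_or_lt_of_le hm with rfl | hmn
  · refine ⟨q, hq, ?_⟩
    rw [mem_dyadicGen]
    exact ⟨hq.1, subset_rfl, by rw [Nat.sub_self, anc_self, Set.ncard_empty]⟩
  · -- pick a point of q
    obtain ⟨x, hx⟩ := nonempty q.1 q.2
    have hfin : (anc F q q₀).Finite := anc_finite hx
    have hncard : (anc F q q₀).ncard = n := hq.2.2
    have hinj : Set.InjOn Prod.fst (anc F q q₀) := anc_injOn_fst hx
    set T : Finset ℤ := hfin.toFinset.image Prod.fst with hT
    have hTcard : T.card = n := by
      rw [hT, Finset.card_image_of_injOn (by simpa using hinj),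
        ← Set.ncard_eq_toFinset_card _ hfin, hncard]
    obtain ⟨t, htT, hcard1, hcard2⟩ := exists_count_above T m (by omega)
    obtain ⟨p, hpS, hpt⟩ : ∃ p ∈ anc F q q₀, p.1 = t := by
      rw [hT] at htT
      simp only [Finset.mem_image, Set.Finite.mem_toFinset] at htT
      obtain ⟨p, hp, hpt⟩ := htT
      exact ⟨p, hp, hpt⟩
    -- counts transfer
    have himg1 : Prod.fst '' (anc F p q₀) = ↑(T.filter (fun b => t < b)) := by
      rw [anc_of_anc hpS]
      ext b'
      simp only [Set.mem_image, Finset.coe_filter, Set.mem_setOf_eq, Finset.mem_filter, hT,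
        Finset.mem_image, Set.Finite.mem_toFinset]
      constructor
      · rintro ⟨b, ⟨hbS, hlt⟩, rfl⟩
        refine ⟨⟨b, hbS, rfl⟩, ?_⟩
        rw [← hpt]
        exact (ssubset_iff_scale (mem_anc_of_mem hx hpS) (mem_anc_of_mem hx hbS)).mp hlt
      · rintro ⟨⟨b, hbS, rfl⟩, hlt⟩
        refine ⟨b, ⟨hbS, ?_⟩, rfl⟩
        rw [← hpt] at hlt
        exact (ssubset_iff_scale (mem_anc_of_mem hx hpS) (mem_anc_of_mem hx hbS)).mpr hlt
    have himg2 : Prod.fst '' (anc F q p) = ↑(T.filter (fun b => b ≤ t)) := by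
      rw [anc_below hpS]
      ext b'
      simp only [Set.mem_image, Finset.coe_filter, Set.mem_setOf_eq, Finset.mem_filter, hT,
        Finset.mem_image, Set.Finite.mem_toFinset]
      constructor
      · rintro ⟨b, ⟨hbS, hle⟩, rfl⟩
        refine ⟨⟨b, hbS, rfl⟩, ?_⟩
        rw [← hpt]
        exact (subset_iff_scale (mem_anc_of_mem hx hbS) (mem_anc_of_mem hx hpS)).mp hle
      · rintro ⟨⟨b, hbS, rfl⟩, hle⟩
        refine ⟨b, ⟨hbS, ?_⟩, rfl⟩
        rw [← hpt] at hle
        exact (subset_iff_scale (mem_anc_of_mem hx hbS) (mem_anc_of_mem hx hpS)).mpr hle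
    have hsub1 : anc F p q₀ ⊆ anc F q q₀ := by
      rw [anc_of_anc hpS]; exact Set.sep_subset _ _
    have hsub2 : anc F q p ⊆ anc F q q₀ := by
      rw [anc_below hpS]; exact Set.sep_subset _ _
    have hn1 : (anc F p q₀).ncard = m := by
      rw [← Set.ncard_image_of_injOn (hinj.mono hsub1), himg1, Set.ncard_coe_finset, hcard1]
    have hn2 : (anc F q p).ncard = n - m := by
      rw [← Set.ncard_image_of_injOn (hinj.mono hsub2), himg2, Set.ncard_coe_finset, hcard2,
        hTcard]
    exact ⟨p, ⟨hpS.1, hpS.2.2, hn1⟩, ⟨hq.1, hpS.2.1.subset, hn2⟩⟩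


noncomputable def beta (μ : Measure ℝ) (F : Set (ℤ × ℤ)) (q₀ : ℤ × ℤ) (m : ℕ) : ℝ≥0∞ :=
  ∑' q : dyadicGen F q₀ m, μ (dyadicInterval q.1.1 q.1.2)

lemma gen_zero {F : Set (ℤ × ℤ)} {q₀ : ℤ × ℤ} (h : q₀ ∈ F) :
    dyadicGen F q₀ 0 = {q₀} := by
  ext q
  simp only [Set.mem_singleton_iff]
  constructor
  · rintro ⟨hqF, hsub, hn⟩
    obtain ⟨x, hx⟩ := nonempty q.1 q.2
    have hfin := anc_finite (q₀ := q₀) hx (F := F)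
    have hempty : anc F q q₀ = ∅ := (Set.ncard_eq_zero hfin).mp hn
    by_contra hne
    have hss : dyadicInterval q.1 q.2 ⊂ dyadicInterval q₀.1 q₀.2 := by
      refine ⟨hsub, fun hba => hne ?_⟩
      have heq : dyadicInterval q.1 q.2 = dyadicInterval q₀.1 q₀.2 :=
        le_antisymm hsub hba
      obtain ⟨h1, h2⟩ := inj heq
      exact Prod.ext h1 h2
    have hm : q₀ ∈ anc F q q₀ := ⟨h, hss, subset_rfl⟩
    rw [hempty] at hm
    exact hm
  · rintro rfl
    refine ⟨h, subset_rfl, ?_⟩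
    show (anc F q q).ncard = 0
    rw [anc_self, Set.ncard_empty]

lemma beta_zero (μ : Measure ℝ) {F : Set (ℤ × ℤ)} {q₀ : ℤ × ℤ} (h : q₀ ∈ F) :
    beta μ F q₀ 0 = μ (dyadicInterval q₀.1 q₀.2) := by
  rw [beta, gen_zero h]
  exact tsum_singleton q₀ (fun p => μ (dyadicInterval p.1 p.2))

lemma beta_step (μ : Measure ℝ) (F : Set (ℤ × ℤ)) (q₀ : ℤ × ℤ) (m j : ℕ) :
    beta μ F q₀ (m + j) ≤
      ∑' p : dyadicGen F q₀ m, ∑' q : dyadicGen F (p : ℤ × ℤ) j,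
        μ (dyadicInterval q.1.1 q.1.2) := by
  classical
  have hpar : ∀ q : dyadicGen F q₀ (m + j),
      ∃ p, p ∈ dyadicGen F q₀ m ∧ (q : ℤ × ℤ) ∈ dyadicGen F p j := by
    intro q
    obtain ⟨p, hp1, hp2⟩ := exists_parent q.2 (Nat.le_add_right m j)
    rw [Nat.add_sub_cancel_left] at hp2
    exact ⟨p, hp1, hp2⟩
  let f : dyadicGen F q₀ (m + j) → Σ p : dyadicGen F q₀ m, dyadicGen F (p : ℤ × ℤ) j :=
    fun q => ⟨⟨(hpar q).choose, (hpar q).choose_spec.1⟩, ⟨(q : ℤ × ℤ), (hpar q).choose_spec.2⟩⟩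
  have hf : Function.Injective f := by
    intro a b hab
    have hval : (a : ℤ × ℤ) = (b : ℤ × ℤ) :=
      congrArg (fun x : Σ p : dyadicGen F q₀ m, dyadicGen F (p : ℤ × ℤ) j => (x.2.1 : ℤ × ℤ)) hab
    exact Subtype.ext hval
  calc beta μ F q₀ (m + j)
      = ∑' q : dyadicGen F q₀ (m + j),
          (fun x : Σ p : dyadicGen F q₀ m, dyadicGen F (p : ℤ × ℤ) j =>
            μ (dyadicInterval x.2.1.1 x.2.1.2)) (f q) := rfl
    _ ≤ ∑' x : Σ p : dyadicGen F q₀ m, dyadicGen F (p : ℤ × ℤ) j,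
          μ (dyadicInterval x.2.1.1 x.2.1.2) := ENNReal.tsum_comp_le_tsum_of_injective hf _
    _ = _ := ENNReal.tsum_sigma
          (fun (p : dyadicGen F q₀ m) (q : dyadicGen F (p : ℤ × ℤ) j) =>
            μ (dyadicInterval (q : ℤ × ℤ).1 (q : ℤ × ℤ).2))

lemma desc_le (μ : Measure ℝ) (F : Set (ℤ × ℤ)) (p : ℤ × ℤ) :
    ∑' j : ℕ, ∑' q : dyadicGen F p j, μ (dyadicInterval q.1.1 q.1.2)
      ≤ ∑' q : {q : ℤ × ℤ // q ∈ F ∧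
            dyadicInterval q.1 q.2 ⊆ dyadicInterval p.1 p.2},
          μ (dyadicInterval q.1.1 q.1.2) := by
  rw [← ENNReal.tsum_sigma (fun j (q : dyadicGen F p j) => μ (dyadicInterval q.1.1 q.1.2))]
  let g : (Σ j : ℕ, dyadicGen F p j) →
      {q : ℤ × ℤ // q ∈ F ∧ dyadicInterval q.1 q.2 ⊆ dyadicInterval p.1 p.2} :=
    fun x => ⟨x.2.1, x.2.2.1, x.2.2.2.1⟩
  have hg : Function.Injective g := by
    rintro ⟨j, q⟩ ⟨j', q'⟩ h
    have hv : (q : ℤ × ℤ) = (q' : ℤ × ℤ) := congrArg Subtype.val h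
    have hj : j = j' := by
      rw [← q.2.2.2, ← q'.2.2.2, hv]
    subst hj
    exact congrArg (Sigma.mk j) (Subtype.ext hv)
  calc ∑' x : Σ j : ℕ, dyadicGen F p j, μ (dyadicInterval x.2.1.1 x.2.1.2)
      = ∑' x : Σ j : ℕ, dyadicGen F p j,
          (fun q : {q : ℤ × ℤ // q ∈ F ∧
              dyadicInterval q.1 q.2 ⊆ dyadicInterval p.1 p.2} =>
            μ (dyadicInterval q.1.1 q.1.2)) (g x) := rfl
    _ ≤ _ := ENNReal.tsum_comp_le_tsum_of_injective hg _

lemma key (C₀ : ℝ≥0) (μ : Measure ℝ) (F : Set (ℤ × ℤ))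
    (hC : ∀ q₀ ∈ F,
      ∑' q : {q : ℤ × ℤ // q ∈ F ∧
          dyadicInterval q.1 q.2 ⊆ dyadicInterval q₀.1 q₀.2},
        μ (dyadicInterval q.1.1 q.1.2)
        ≤ (C₀ : ℝ≥0∞) * μ (dyadicInterval q₀.1 q₀.2))
    (q₀ : ℤ × ℤ) (m : ℕ) :
    ∑' j : ℕ, beta μ F q₀ (m + j) ≤ (C₀ : ℝ≥0∞) * beta μ F q₀ m := by
  calc ∑' j : ℕ, beta μ F q₀ (m + j)
      ≤ ∑' j : ℕ, ∑' p : dyadicGen F q₀ m, ∑' q : dyadicGen F (p : ℤ × ℤ) j,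
          μ (dyadicInterval q.1.1 q.1.2) :=
        ENNReal.tsum_le_tsum (fun j => beta_step μ F q₀ m j)
    _ = ∑' p : dyadicGen F q₀ m, ∑' j : ℕ, ∑' q : dyadicGen F (p : ℤ × ℤ) j,
          μ (dyadicInterval q.1.1 q.1.2) := ENNReal.tsum_comm
    _ ≤ ∑' p : dyadicGen F q₀ m, (C₀ : ℝ≥0∞) * μ (dyadicInterval (p : ℤ × ℤ).1 (p : ℤ × ℤ).2) :=
        ENNReal.tsum_le_tsum (fun p => (desc_le μ F p).trans (hC p p.2.1))
    _ = (C₀ : ℝ≥0∞) * beta μ F q₀ m := ENNReal.tsum_mul_left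

end Dy

/-- If a collection `F` of dyadic intervals satisfies a `μ`-Carleson condition with
constant `C₀`, then there are positive constants `δ, C_δ` depending only on `C₀`
such that the `n`-th generation descendants of any `F₀ ∈ F` carry total `μ`-measure
at most `C_δ · 2^{−δn} · μ(F₀)`. -/

theorem stmt2 (C₀ : ℝ≥0) :
    ∃ δ : ℝ, 0 < δ ∧ ∃ Cδ : ℝ, 0 < Cδ ∧
      ∀ (μ : Measure ℝ), IsLocallyFiniteMeasure μ →
        ∀ F : Set (ℤ × ℤ),
          (∀ q₀ ∈ F,
            ∑' q : {q : ℤ × ℤ // q ∈ F ∧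
                dyadicInterval q.1 q.2 ⊆ dyadicInterval q₀.1 q₀.2},
              μ (dyadicInterval q.1.1 q.1.2)
              ≤ (C₀ : ℝ≥0∞) * μ (dyadicInterval q₀.1 q₀.2)) →
          ∀ q₀ ∈ F, ∀ n : ℕ,
            ∑' q : dyadicGen F q₀ n, μ (dyadicInterval q.1.1 q.1.2)
              ≤ ENNReal.ofReal (Cδ * 2 ^ (-δ * (n : ℝ))) *
                  μ (dyadicInterval q₀.1 q₀.2) := by
  set N : ℕ := 2 * ⌈(C₀ : ℝ)⌉₊ + 1 with hN
  have hN0 : 0 < N := by omega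
  have hN0' : (0:ℝ) < N := by exact_mod_cast hN0
  have hNC : 2 * (C₀ : ℝ) < N := by
    have h := Nat.le_ceil (C₀ : ℝ)
    rw [hN]
    push_cast
    linarith
  refine ⟨1 / (N : ℝ), one_div_pos.mpr hN0', 2 * ((C₀ : ℝ) + 1), by positivity, ?_⟩
  intro μ hμ F hC q₀ hq₀ n
  haveI := hμ
  set Q := dyadicInterval q₀.1 q₀.2 with hQ
  have hQfin : μ Q < ⊤ := by
    calc μ Q ≤ μ (Set.Icc ((q₀.2:ℝ) * 2 ^ q₀.1) (((q₀.2:ℝ) + 1) * 2 ^ q₀.1)) :=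
        measure_mono Set.Ico_subset_Icc_self
    _ < ⊤ := (isCompact_Icc).measure_lt_top
  have hkey := Dy.key C₀ μ F hC q₀
  have hb0 : Dy.beta μ F q₀ 0 = μ Q := Dy.beta_zero μ hq₀
  have hmono : ∀ m k : ℕ, m ≤ k → Dy.beta μ F q₀ k ≤ (C₀ : ℝ≥0∞) * Dy.beta μ F q₀ m := by
    intro m k hmk
    have h1 : Dy.beta μ F q₀ (m + (k - m)) ≤ ∑' j : ℕ, Dy.beta μ F q₀ (m + j) :=
      ENNReal.le_tsum _
    rw [Nat.add_sub_cancel' hmk] at h1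
    exact h1.trans (hkey m)
  have hfin : ∀ m, Dy.beta μ F q₀ m ≠ ⊤ := by
    intro m
    refine ((hmono 0 m (Nat.zero_le m)).trans_lt ?_).ne
    rw [hb0]
    exact ENNReal.mul_lt_top ENNReal.coe_lt_top hQfin
  have hhalf : ∀ m : ℕ, ∃ j, 1 ≤ j ∧ j ≤ N ∧
      Dy.beta μ F q₀ (m + j) ≤ Dy.beta μ F q₀ m / 2 := by
    intro m
    by_cases h0 : Dy.beta μ F q₀ m = 0
    · refine ⟨1, le_refl _, hN0, ?_⟩
      have h1 := hmono m (m + 1) (by omega)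
      rw [h0] at h1 ⊢
      simpa using h1
    · by_contra hcon
      push_neg at hcon
      have hlt : ∀ j ∈ Finset.Icc 1 N, Dy.beta μ F q₀ m / 2 ≤ Dy.beta μ F q₀ (m + j) := by
        intro j hj
        rw [Finset.mem_Icc] at hj
        exact (hcon j hj.1 hj.2).le
      have hsum : (N : ℝ≥0∞) * (Dy.beta μ F q₀ m / 2) ≤ (C₀ : ℝ≥0∞) * Dy.beta μ F q₀ m := by
        calc (N : ℝ≥0∞) * (Dy.beta μ F q₀ m / 2)
            = ∑ _j ∈ Finset.Icc 1 N, Dy.beta μ F q₀ m / 2 := by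
              rw [Finset.sum_const, Nat.card_Icc]
              simp [nsmul_eq_mul]
          _ ≤ ∑ j ∈ Finset.Icc 1 N, Dy.beta μ F q₀ (m + j) := Finset.sum_le_sum hlt
          _ ≤ ∑' j : ℕ, Dy.beta μ F q₀ (m + j) := ENNReal.sum_le_tsum _
          _ ≤ (C₀ : ℝ≥0∞) * Dy.beta μ F q₀ m := hkey m
      have h2 : (N : ℝ≥0∞) * (Dy.beta μ F q₀ m / 2)
          = ((N : ℝ≥0∞) / 2) * Dy.beta μ F q₀ m := by
        rw [ENNReal.div_eq_inv_mul, ENNReal.div_eq_inv_mul]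
        ring
      rw [h2] at hsum
      have h3 : (N : ℝ≥0∞) / 2 ≤ (C₀ : ℝ≥0∞) :=
        (ENNReal.mul_le_mul_iff_left h0 (hfin m)).mp hsum
      have h4 : (N : ℝ) / 2 ≤ (C₀ : ℝ) := by
        have h5 := ENNReal.toReal_mono ENNReal.coe_ne_top h3
        simpa [ENNReal.toReal_div] using h5
      linarith
  have hdecay : ∀ i : ℕ, ∃ m, m ≤ N * i ∧
      Dy.beta μ F q₀ m ≤ (2⁻¹ : ℝ≥0∞) ^ i * μ Q := by
    intro i
    induction i with
    | zero => exact ⟨0, le_refl _, by rw [hb0]; simp⟩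
    | succ i ih =>
      obtain ⟨m, hm, hbm⟩ := ih
      obtain ⟨j, _hj1, hjN, hbj⟩ := hhalf m
      refine ⟨m + j, ?_, ?_⟩
      · calc m + j ≤ N * i + N := Nat.add_le_add hm hjN
        _ = N * (i + 1) := by ring
      · calc Dy.beta μ F q₀ (m + j) ≤ Dy.beta μ F q₀ m / 2 := hbj
        _ ≤ ((2⁻¹ : ℝ≥0∞) ^ i * μ Q) / 2 := ENNReal.div_le_div_right hbm 2
        _ = (2⁻¹ : ℝ≥0∞) ^ (i + 1) * μ Q := by
            rw [ENNReal.div_eq_inv_mul, pow_succ]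
            ring
  obtain ⟨m, hm, hbm⟩ := hdecay (n / N)
  set i := n / N with hidef
  have hmn : m ≤ n := hm.trans (Nat.mul_div_le n N)
  have hfinal : Dy.beta μ F q₀ n ≤ (C₀ : ℝ≥0∞) * ((2⁻¹ : ℝ≥0∞) ^ i * μ Q) :=
    (hmono m n hmn).trans (mul_le_mul_right hbm _)
  have hi : n < N * i + N := by
    have h6 := Nat.div_add_mod n N
    rw [← hidef] at h6
    have h7 := Nat.mod_lt n hN0
    omega
  have hreal : (C₀ : ℝ) * (2⁻¹ : ℝ) ^ i ≤ 2 * ((C₀ : ℝ) + 1) * 2 ^ (-(1 / (N:ℝ)) * n) := by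
    have h2i : ((2:ℝ)⁻¹) ^ i = (2:ℝ) ^ (-(i:ℝ)) := by
      rw [Real.rpow_neg (by norm_num), Real.rpow_natCast, inv_pow]
    have hdiv : (n:ℝ) / N ≤ i + 1 := by
      rw [div_le_iff₀ hN0']
      have hn2 : (n:ℝ) < N * i + N := by exact_mod_cast hi
      nlinarith
    have hexp : -(i:ℝ) ≤ 1 + (-(1 / (N:ℝ)) * n) := by
      have hh : -(1 / (N:ℝ)) * n = -((n:ℝ) / N) := by ring
      rw [hh]
      linarith
    have hrp : (0:ℝ) < (2:ℝ) ^ (-(1 / (N:ℝ)) * n) :=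
      Real.rpow_pos_of_pos (by norm_num) _
    calc (C₀ : ℝ) * (2⁻¹ : ℝ) ^ i = (C₀ : ℝ) * (2:ℝ) ^ (-(i:ℝ)) := by rw [h2i]
      _ ≤ (C₀ : ℝ) * (2:ℝ) ^ (1 + (-(1 / (N:ℝ)) * n)) := by
          apply mul_le_mul_of_nonneg_left _ C₀.coe_nonneg
          exact Real.rpow_le_rpow_of_exponent_le (by norm_num) hexp
      _ = (C₀ : ℝ) * (2 * 2 ^ (-(1 / (N:ℝ)) * n)) := by
          rw [Real.rpow_add (by norm_num), Real.rpow_one]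
      _ ≤ 2 * ((C₀ : ℝ) + 1) * 2 ^ (-(1 / (N:ℝ)) * n) := by
          nlinarith [C₀.coe_nonneg]
  have hENN : (C₀ : ℝ≥0∞) * (2⁻¹ : ℝ≥0∞) ^ i
      ≤ ENNReal.ofReal (2 * ((C₀ : ℝ) + 1) * 2 ^ (-(1 / (N:ℝ)) * n)) := by
    have hl : (C₀ : ℝ≥0∞) * (2⁻¹ : ℝ≥0∞) ^ i
        = ENNReal.ofReal ((C₀ : ℝ) * (2⁻¹ : ℝ) ^ i) := by
      rw [ENNReal.ofReal_mul C₀.coe_nonneg, ENNReal.ofReal_pow (by norm_num),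
        ENNReal.ofReal_coe_nnreal]
      congr 1
      rw [ENNReal.ofReal_inv_of_pos (by norm_num)]
      norm_num
    rw [hl]
    exact ENNReal.ofReal_le_ofReal hreal
  refine le_trans hfinal ?_
  rw [← mul_assoc]
  exact mul_le_mul_left hENN _
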